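/- For every finite string W over {A, X, B}, one has |W| = |[XW]| − |[AXW]|, where |W| is the open value and |[·]| denotes the locked value in the tight puzzle. -/

import Mathlib

/-!
The "tight puzzle" of Schwartz–Tabachnikov.  Strings over the alphabet `{A, X, B}`;
word list (coefficient, weight): `X (1,0)`, `XA (1,1)`, `XAA (1,1)`, `AXA (2,1)`,
`AAA (-1,1)`, `BA (-1,1)`, `ABA (-1,1)`, `XXA (-1,1)`; in a parsing the word `X` may
never be immediately followed by the word `XA` or the word `BA`.
-/

open scoped Classical

/-- The three-letter alphabet. -/
inductive PLetter | A | X | B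
deriving DecidableEq

/-- Strings over the alphabet. -/
abbrev PWord := List PLetter

/-- The tight puzzle word list. -/
def tightWords : List PWord :=
  [[PLetter.X], [PLetter.X, PLetter.A], [PLetter.X, PLetter.A, PLetter.A],
   [PLetter.A, PLetter.X, PLetter.A], [PLetter.A, PLetter.A, PLetter.A],
   [PLetter.B, PLetter.A], [PLetter.A, PLetter.B, PLetter.A],
   [PLetter.X, PLetter.X, PLetter.A]]

/-- Coefficients of the words of the tight puzzle (`AXA ↦ 2`; `AAA, BA, ABA, XXA ↦ -1`;
`X, XA, XAA ↦ 1`). -/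
def tightCoeff (w : PWord) : ℤ :=
  if w = [PLetter.A, PLetter.X, PLetter.A] then 2
  else if w = [PLetter.A, PLetter.A, PLetter.A] ∨ w = [PLetter.B, PLetter.A] ∨
      w = [PLetter.A, PLetter.B, PLetter.A] ∨ w = [PLetter.X, PLetter.X, PLetter.A] then -1
  else 1

/-- Weights of the words: the word `X` has weight `0`, all other words weight `1`. -/
def wordWt (w : PWord) : ℕ := if w = [PLetter.X] then 0 else 1

/-- The forbidden adjacency: the word `X` immediately followed by `XA` or `BA`. -/
def Bad (u v : PWord) : Prop :=
  u = [PLetter.X] ∧ (v = [PLetter.X, PLetter.A] ∨ v = [PLetter.B, PLetter.A])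

/-- The contribution `coefficient · t^weight ∈ ℤ[t]` of a parsing `L`. -/
noncomputable def parseVal (c : PWord → ℤ) (L : List PWord) : Polynomial ℤ :=
  Polynomial.C ((L.map c).prod) * Polynomial.X ^ ((L.map wordWt).sum)

/-- `L` is a parsing in the tight puzzle: all its words are on the word list and the
forbidden adjacency never occurs. -/
def TightChain (L : List PWord) : Prop :=
  (∀ w ∈ L, w ∈ tightWords) ∧ List.Chain' (fun u v => ¬ Bad u v) L

/-- The *core* of a string: what remains after deleting all leading and trailing `X`s. -/
def core (s : PWord) : PWord :=
  ((s.dropWhile (· == PLetter.X)).reverse.dropWhile (· == PLetter.X)).reverse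

/-- `L` is a parsing of the bi-infinite string `⋯XX·W·XX⋯` (with the infinitely many
padding `X`s parsed as copies of the word `X` and trimmed away): the words of `L`
concatenate to `W` up to padding by `X`s on either side, `L` neither starts nor ends
with the word `X`, and (because of the padding `X`-words on the left) the first word
of `L` is not `XA` or `BA`. -/
def IsOpenParsing (W : PWord) (L : List PWord) : Prop :=
  TightChain L ∧ core L.flatten = core W ∧
  ∀ h : L ≠ [],
    L.head h ≠ [PLetter.X] ∧ L.head h ≠ [PLetter.X, PLetter.A] ∧
    L.head h ≠ [PLetter.B, PLetter.A] ∧ L.getLast h ≠ [PLetter.X]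

/-- `(r, L)` is a parsing of the cyclic string `(W)`: reading the necklace of the
letters of `W` starting at position `r`, the words of `L` concatenate to it, the
forbidden adjacency does not occur (cyclically), and `r < (last word).length`
(so that every parsing of the necklace is counted exactly once). -/
def IsCyclicParsing (W : PWord) (r : ℕ) (L : List PWord) : Prop :=
  TightChain L ∧
  ∃ h : L ≠ [], L.flatten = W.rotate r ∧ r < (L.getLast h).length ∧
    ¬ Bad (L.getLast h) (L.head h)

/-- `L` is a parsing of the locked string `[W]`: the words of `L` concatenate exactly
to `W`, no padding allowed. -/
def IsLockedParsing (W : PWord) (L : List PWord) : Prop :=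
  TightChain L ∧ L.flatten = W

/-- The nine words of both puzzles, as a function (used to enumerate parsings). -/
def wordOf : Fin 9 → PWord :=
  ![[PLetter.X], [PLetter.X, PLetter.A], [PLetter.X, PLetter.A, PLetter.A],
    [PLetter.X, PLetter.B, PLetter.A], [PLetter.A, PLetter.X, PLetter.A],
    [PLetter.A, PLetter.A, PLetter.A], [PLetter.B, PLetter.A],
    [PLetter.A, PLetter.B, PLetter.A], [PLetter.X, PLetter.X, PLetter.A]]

/-- The open value `|W| ∈ ℤ[t]`: the sum of `coefficient · t^weight` over all parsings
of the bi-infinite string `⋯XX·W·XX⋯` (any such parsing consists of at most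
`W.length + 2` words). -/
noncomputable def openVal (W : PWord) : Polynomial ℤ :=
  ∑ k ∈ Finset.range (W.length + 3), ∑ f : Fin k → Fin 9,
    if IsOpenParsing W ((List.ofFn f).map wordOf) then
      parseVal tightCoeff ((List.ofFn f).map wordOf)
    else 0

/-- The cyclic value `|(W)| ∈ ℤ[t]`: the sum of `coefficient · t^weight` over all
parsings of the cyclic string `(W)`. -/
noncomputable def cycVal (W : PWord) : Polynomial ℤ :=
  ∑ r ∈ Finset.range W.length, ∑ k ∈ Finset.range (W.length + 1), ∑ f : Fin k → Fin 9,
    if IsCyclicParsing W r ((List.ofFn f).map wordOf) then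
      parseVal tightCoeff ((List.ofFn f).map wordOf)
    else 0

/-- The locked value `|[W]| ∈ ℤ[t]`: the sum of `coefficient · t^weight` over all
parsings whose concatenation is exactly `W`. -/
noncomputable def lockVal (W : PWord) : Polynomial ℤ :=
  ∑ k ∈ Finset.range (W.length + 1), ∑ f : Fin k → Fin 9,
    if IsLockedParsing W ((List.ofFn f).map wordOf) then
      parseVal tightCoeff ((List.ofFn f).map wordOf)
    else 0

namespace TightAux
open PLetter List

/-- Shorthand for the polynomial variable `t`. -/
noncomputable def PT : Polynomial ℤ := Polynomial.X

/-- Shorthand for `Polynomial.C`. -/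
noncomputable def PC (n : ℤ) : Polynomial ℤ := Polynomial.C n

/-! ### The recursive locked values `lk` (= `|[W]|`) and `em` (after-`X` version) -/

mutual
noncomputable def lk : PWord → Polynomial ℤ
  | [] => 1
  | X :: V => em V + PT * (if [A] <+: V then lk (V.drop 1) else 0)
      + PT * (if [A, A] <+: V then lk (V.drop 2) else 0)
      - PT * (if [X, A] <+: V then lk (V.drop 2) else 0)
  | A :: V => PC 2 * PT * (if [X, A] <+: V then lk (V.drop 2) else 0)
      - PT * (if [A, A] <+: V then lk (V.drop 2) else 0)
      - PT * (if [B, A] <+: V then lk (V.drop 2) else 0)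
  | B :: V => - (PT * (if [A] <+: V then lk (V.drop 1) else 0))
termination_by W => W.length
decreasing_by all_goals simp [List.length_drop] <;> omega

noncomputable def em : PWord → Polynomial ℤ
  | [] => 1
  | X :: V => em V + PT * (if [A, A] <+: V then lk (V.drop 2) else 0)
      - PT * (if [X, A] <+: V then lk (V.drop 2) else 0)
  | A :: V => PC 2 * PT * (if [X, A] <+: V then lk (V.drop 2) else 0)
      - PT * (if [A, A] <+: V then lk (V.drop 2) else 0)
      - PT * (if [B, A] <+: V then lk (V.drop 2) else 0)
  | B :: _ => 0
termination_by W => W.length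
decreasing_by all_goals simp [List.length_drop] <;> omega
end

/-- `if P <+: s then lk (s.drop P.length) else 0`. -/
noncomputable def lkp (P s : PWord) : Polynomial ℤ :=
  if P <+: s then lk (s.drop P.length) else 0

lemma lk_nil : lk [] = 1 := by rw [lk]
lemma em_nil : em [] = 1 := by rw [em]
lemma lk_X (V : PWord) :
    lk (X :: V) = em V + PT * lkp [A] V + PT * lkp [A, A] V - PT * lkp [X, A] V := by
  rw [lk]; rfl
lemma lk_A (V : PWord) :
    lk (A :: V) = PC 2 * PT * lkp [X, A] V - PT * lkp [A, A] V - PT * lkp [B, A] V := by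
  rw [lk]; rfl
lemma lk_B (V : PWord) : lk (B :: V) = - (PT * lkp [A] V) := by rw [lk]; rfl
lemma em_X (V : PWord) :
    em (X :: V) = em V + PT * lkp [A, A] V - PT * lkp [X, A] V := by
  rw [em]; rfl
lemma em_A (V : PWord) :
    em (A :: V) = PC 2 * PT * lkp [X, A] V - PT * lkp [A, A] V - PT * lkp [B, A] V := by
  rw [em]; rfl
lemma em_B (V : PWord) : em (B :: V) = 0 := by rw [em]

lemma lkp_nil (a : PLetter) (P : PWord) : lkp (a :: P) [] = 0 := by
  simp [lkp]
lemma lkp_cons (a b : PLetter) (P s : PWord) :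
    lkp (a :: P) (b :: s) = if a = b then lkp P s else 0 := by
  by_cases hab : a = b
  · subst hab
    simp [lkp, List.cons_prefix_cons]
  · simp [lkp, List.cons_prefix_cons, hab]

end TightAux
namespace TightAux
open PLetter List

/-! ### Sum machinery -/

/-- The generic sum appearing in `openVal`/`lockVal`. -/
noncomputable def S (N : ℕ) (F : List PWord → Polynomial ℤ) : Polynomial ℤ :=
  ∑ k ∈ Finset.range N, ∑ f : Fin k → Fin 9, F ((List.ofFn f).map wordOf)

lemma S_congr {N : ℕ} {F G : List PWord → Polynomial ℤ} (h : ∀ L, F L = G L) :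
    S N F = S N G := by
  simp only [S, h]

lemma S_zero (N : ℕ) : S N (fun _ => 0) = 0 := by simp [S]

lemma S_mul (N : ℕ) (c : Polynomial ℤ) (F : List PWord → Polynomial ℤ) :
    S N (fun L => c * F L) = c * S N F := by
  simp [S, Finset.mul_sum]

lemma S_succ (N : ℕ) (F : List PWord → Polynomial ℤ) :
    S (N + 1) F = F [] + ∑ i : Fin 9, S N (fun L => F (wordOf i :: L)) := by
  rw [S, Finset.sum_range_succ']
  have h0 : ∑ f : Fin 0 → Fin 9, F ((List.ofFn f).map wordOf) = F [] := by
    rw [Fintype.sum_unique]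
    simp
  rw [h0, add_comm]
  congr 1
  have key : ∀ k : ℕ, ∑ f : Fin (k + 1) → Fin 9, F ((List.ofFn f).map wordOf)
      = ∑ i : Fin 9, ∑ f : Fin k → Fin 9, F (wordOf i :: (List.ofFn f).map wordOf) := by
    intro k
    rw [← Equiv.sum_comp (Fin.consEquiv (fun _ : Fin (k+1) => Fin 9))
      (fun f => F ((List.ofFn f).map wordOf)), Fintype.sum_prod_type]
    apply Finset.sum_congr rfl
    intro i _
    apply Finset.sum_congr rfl
    intro f _
    congr 1
    rw [List.ofFn_succ]
    simp [Fin.consEquiv]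
  simp only [key, S]
  rw [Finset.sum_comm]

/-! ### Pointwise analysis of locked parsings -/

/-- The summand of `lockVal`. -/
noncomputable def lockedF (W : PWord) (L : List PWord) : Polynomial ℤ :=
  if IsLockedParsing W L then parseVal tightCoeff L else 0

/-- The summand of the "after an `X`" locked value. -/
noncomputable def lockedFM (W : PWord) (L : List PWord) : Polynomial ℤ :=
  if IsLockedParsing W L ∧ ∀ h : L ≠ [],
      L.head h ≠ [X, A] ∧ L.head h ≠ [B, A] then parseVal tightCoeff L else 0

lemma lockVal_eq_S (W : PWord) : lockVal W = S (W.length + 1) (lockedF W) := rfl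

lemma openVal_eq_S (W : PWord) :
    openVal W = S (W.length + 3) (fun L => if IsOpenParsing W L then parseVal tightCoeff L else 0) := rfl

lemma parseVal_nil : parseVal tightCoeff [] = 1 := by
  simp [parseVal]

lemma parseVal_cons (w : PWord) (hw : w ≠ [X]) (L : List PWord) :
    parseVal tightCoeff (w :: L) = PC (tightCoeff w) * PT * parseVal tightCoeff L := by
  simp only [parseVal, List.map_cons, List.prod_cons, List.sum_cons, PC, PT]
  rw [map_mul, wordWt, if_neg hw, pow_add, pow_one]
  ring

lemma parseVal_cons_X (L : List PWord) :
    parseVal tightCoeff ([X] :: L) = parseVal tightCoeff L := by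
  have h1 : tightCoeff [X] = 1 := by decide
  have h2 : wordWt [X] = 0 := by simp [wordWt]
  simp only [parseVal, List.map_cons, List.prod_cons, List.sum_cons, h1, h2, one_mul, zero_add]

lemma lockedF_nil (W : PWord) : lockedF W [] = if W = [] then 1 else 0 := by
  have : IsLockedParsing W [] ↔ W = [] := by
    constructor
    · rintro ⟨-, h⟩; exact h.symm
    · rintro rfl; exact ⟨⟨by simp, List.isChain_nil⟩, rfl⟩
  rw [lockedF]
  split_ifs with h1 h2 h2
  · exact parseVal_nil
  · exact absurd (this.1 h1) h2
  · exact absurd (this.2 h2) h1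
  · rfl

lemma lockedFM_nil (W : PWord) : lockedFM W [] = if W = [] then 1 else 0 := by
  rw [lockedFM, ← lockedF_nil, lockedF]
  by_cases h : IsLockedParsing W []
  · rw [if_pos ⟨h, fun hne => absurd rfl hne⟩, if_pos h]
  · rw [if_neg (fun hh => h hh.1), if_neg h]

lemma not_bad_of_ne {u v : PWord} (h : u ≠ [X]) : ¬ Bad u v := fun hb => h hb.1

lemma lockedF_cons_ne (w : PWord) (hw : w ∈ tightWords) (hne : w ≠ [X]) (V : PWord)
    (L : List PWord) : lockedF (w ++ V) (w :: L) = PC (tightCoeff w) * PT * lockedF V L := by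
  have hiff : IsLockedParsing (w ++ V) (w :: L) ↔ IsLockedParsing V L := by
    constructor
    · rintro ⟨⟨hmem, hch⟩, hfl⟩
      refine ⟨⟨fun u hu => hmem u (List.mem_cons_of_mem _ hu), (List.isChain_cons.1 hch).2⟩, ?_⟩
      rw [List.flatten_cons] at hfl
      exact List.append_cancel_left hfl
    · rintro ⟨⟨hmem, hch⟩, hfl⟩
      refine ⟨⟨?_, List.isChain_cons.2 ⟨fun y _ => not_bad_of_ne hne, hch⟩⟩, ?_⟩
      · intro u hu
        rcases List.mem_cons.1 hu with rfl | hu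
        · exact hw
        · exact hmem u hu
      · rw [List.flatten_cons, hfl]
  rw [lockedF, lockedF]
  split_ifs with h1 h2 h2
  · exact parseVal_cons w hne L
  · exact absurd (hiff.1 h1) h2
  · exact absurd (hiff.2 h2) h1
  · rw [mul_zero]

lemma lockedF_cons_nomatch (w : PWord) (W : PWord) (h : ¬ w <+: W) (L : List PWord) :
    lockedF W (w :: L) = 0 := by
  rw [lockedF, if_neg]
  rintro ⟨-, hfl⟩
  exact h ⟨L.flatten, hfl⟩

lemma lockedF_not_tight (w : PWord) (hw : w ∉ tightWords) (W : PWord) (L : List PWord) :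
    lockedF W (w :: L) = 0 := by
  rw [lockedF, if_neg]
  rintro ⟨⟨hmem, -⟩, -⟩
  exact hw (hmem w (List.mem_cons_self))

lemma lockedF_cons_X (V : PWord) (L : List PWord) :
    lockedF (X :: V) ([X] :: L) = lockedFM V L := by
  have hiff : IsLockedParsing (X :: V) ([X] :: L) ↔
      IsLockedParsing V L ∧ ∀ h : L ≠ [], L.head h ≠ [X, A] ∧ L.head h ≠ [B, A] := by
    constructor
    · rintro ⟨⟨hmem, hch⟩, hfl⟩
      obtain ⟨hhd, hch'⟩ := List.isChain_cons.1 hch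
      refine ⟨⟨⟨fun u hu => hmem u (List.mem_cons_of_mem _ hu), hch'⟩, ?_⟩, ?_⟩
      · rw [List.flatten_cons] at hfl
        exact List.append_cancel_left (as := [X]) hfl
      · intro h
        have hb := hhd (L.head h) (List.head_mem_head? h)
        constructor
        · intro he; exact hb ⟨rfl, Or.inl he⟩
        · intro he; exact hb ⟨rfl, Or.inr he⟩
    · rintro ⟨⟨⟨hmem, hch⟩, hfl⟩, hhd⟩
      refine ⟨⟨?_, List.isChain_cons.2 ⟨?_, hch⟩⟩, ?_⟩
      · intro u hu
        rcases List.mem_cons.1 hu with rfl | hu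
        · decide
        · exact hmem u hu
      · intro y hy
        have hne : L ≠ [] := by rintro rfl; simp at hy
        rw [List.head?_eq_head hne] at hy
        obtain rfl := Option.mem_some_iff.1 hy
        rintro ⟨-, he | he⟩
        · exact (hhd hne).1 he
        · exact (hhd hne).2 he
      · rw [List.flatten_cons, hfl]; rfl
  rw [lockedF, lockedFM]
  split_ifs with h1 h2 h2
  · exact parseVal_cons_X L
  · exact absurd (hiff.1 h1) h2
  · exact absurd (hiff.2 h2) h1
  · rfl

lemma lockedFM_cons_of (w : PWord) (h1 : w ≠ [X, A]) (h2 : w ≠ [B, A]) (W : PWord)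
    (L : List PWord) : lockedFM W (w :: L) = lockedF W (w :: L) := by
  rw [lockedFM, lockedF]
  by_cases h : IsLockedParsing W (w :: L)
  · rw [if_pos ⟨h, fun _ => by simpa using ⟨h1, h2⟩⟩, if_pos h]
  · rw [if_neg (fun hh => h hh.1), if_neg h]

lemma lockedFM_cons_bad (w : PWord) (h : w = [X, A] ∨ w = [B, A]) (W : PWord)
    (L : List PWord) : lockedFM W (w :: L) = 0 := by
  rw [lockedFM, if_neg]
  rintro ⟨-, hhd⟩
  have := hhd (by simp)
  rcases h with rfl | rfl
  · exact this.1 (by simp)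
  · exact this.2 (by simp)

end TightAux
namespace TightAux
open PLetter List

lemma sum_fin9 (g : Fin 9 → Polynomial ℤ) :
    ∑ i : Fin 9, g i = g 0 + g 1 + g 2 + g 3 + g 4 + g 5 + g 6 + g 7 + g 8 := by
  rw [show (Finset.univ : Finset (Fin 9)) = ({0,1,2,3,4,5,6,7,8} : Finset (Fin 9)) from by decide]
  rw [Finset.sum_insert (by decide), Finset.sum_insert (by decide), Finset.sum_insert (by decide),
    Finset.sum_insert (by decide), Finset.sum_insert (by decide), Finset.sum_insert (by decide),
    Finset.sum_insert (by decide), Finset.sum_insert (by decide), Finset.sum_singleton]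
  ring

lemma tight_ne_nil : ∀ w ∈ tightWords, w ≠ [] := by decide

/-- `if [X] <+: W then em (W.drop 1) else 0`. -/
noncomputable def emp (W : PWord) : Polynomial ℤ :=
  if [X] <+: W then em (W.drop 1) else 0

lemma step_ne (w : PWord) (hw : w ∈ tightWords) (hne : w ≠ [X]) (N : ℕ) (W : PWord)
    (hIH : ∀ V : PWord, V.length < N → S N (lockedF V) = lk V) (hlen : W.length ≤ N) :
    S N (fun L => lockedF W (w :: L)) = PC (tightCoeff w) * PT * lkp w W := by
  by_cases h : w <+: W
  · obtain ⟨V, rfl⟩ := h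
    rw [S_congr (fun L => lockedF_cons_ne w hw hne V L), S_mul]
    rw [lkp, if_pos ⟨V, rfl⟩, List.drop_left]
    rw [hIH V ?_]
    have h1 : 1 ≤ w.length := by
      have := tight_ne_nil w hw
      cases w
      · simp at this
      · simp
    rw [List.length_append] at hlen
    omega
  · rw [S_congr (lockedF_cons_nomatch w W h), S_zero, lkp, if_neg h, mul_zero]

lemma step_X (N : ℕ) (W : PWord)
    (hIH : ∀ V : PWord, V.length < N → S N (lockedFM V) = em V) (hlen : W.length ≤ N) :
    S N (fun L => lockedF W ([X] :: L)) = emp W := by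
  by_cases h : [X] <+: W
  · obtain ⟨V, rfl⟩ := h
    have hfV : ([X] ++ V : PWord) = X :: V := rfl
    rw [S_congr (fun L => by rw [hfV, lockedF_cons_X V L])]
    rw [emp, if_pos ⟨V, rfl⟩]
    have : (([X] ++ V : PWord)).drop 1 = V := rfl
    rw [this, hIH V (by simp at hlen ⊢; omega)]
  · rw [S_congr (lockedF_cons_nomatch [X] W h), S_zero, emp, if_neg h]

lemma step_XBA (N : ℕ) (W : PWord) :
    S N (fun L => lockedF W ([X, B, A] :: L)) = 0 := by
  rw [S_congr (lockedF_not_tight [X, B, A] (by decide) W), S_zero]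

lemma step_M_ne (w : PWord) (hw : w ∈ tightWords) (hne : w ≠ [X]) (h1 : w ≠ [X, A])
    (h2 : w ≠ [B, A]) (N : ℕ) (W : PWord)
    (hIH : ∀ V : PWord, V.length < N → S N (lockedF V) = lk V) (hlen : W.length ≤ N) :
    S N (fun L => lockedFM W (w :: L)) = PC (tightCoeff w) * PT * lkp w W := by
  rw [S_congr (fun L => lockedFM_cons_of w h1 h2 W L)]
  exact step_ne w hw hne N W hIH hlen

lemma step_M_X (N : ℕ) (W : PWord)
    (hIH : ∀ V : PWord, V.length < N → S N (lockedFM V) = em V) (hlen : W.length ≤ N) :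
    S N (fun L => lockedFM W ([X] :: L)) = emp W := by
  rw [S_congr (fun L => lockedFM_cons_of [X] (by decide) (by decide) W L)]
  exact step_X N W hIH hlen

lemma step_M_bad (w : PWord) (h : w = [X, A] ∨ w = [B, A]) (N : ℕ) (W : PWord) :
    S N (fun L => lockedFM W (w :: L)) = 0 := by
  rw [S_congr (fun L => lockedFM_cons_bad w h W L), S_zero]

lemma step_M_XBA (N : ℕ) (W : PWord) :
    S N (fun L => lockedFM W ([X, B, A] :: L)) = 0 := by
  rw [S_congr (fun L => lockedFM_cons_of [X, B, A] (by decide) (by decide) W L)]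
  exact step_XBA N W

/-- The purely algebraic expansion of `lk` along the first word. -/
lemma lk_expand (W : PWord) :
    lk W = (if W = [] then 1 else 0) + emp W
      + PC (tightCoeff [X, A]) * PT * lkp [X, A] W
      + PC (tightCoeff [X, A, A]) * PT * lkp [X, A, A] W
      + PC (tightCoeff [A, X, A]) * PT * lkp [A, X, A] W
      + PC (tightCoeff [A, A, A]) * PT * lkp [A, A, A] W
      + PC (tightCoeff [B, A]) * PT * lkp [B, A] W
      + PC (tightCoeff [A, B, A]) * PT * lkp [A, B, A] W
      + PC (tightCoeff [X, X, A]) * PT * lkp [X, X, A] W := by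
  have c1 : PC (tightCoeff [X, A]) = 1 := by rw [show tightCoeff [X, A] = 1 from by decide]; simp [PC]
  have c2 : PC (tightCoeff [X, A, A]) = 1 := by rw [show tightCoeff [X, A, A] = 1 from by decide]; simp [PC]
  have c4 : PC (tightCoeff [A, A, A]) = -1 := by rw [show tightCoeff [A, A, A] = -1 from by decide]; simp [PC]
  have c5 : PC (tightCoeff [B, A]) = -1 := by rw [show tightCoeff [B, A] = -1 from by decide]; simp [PC]
  have c6 : PC (tightCoeff [A, B, A]) = -1 := by rw [show tightCoeff [A, B, A] = -1 from by decide]; simp [PC]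
  have c7 : PC (tightCoeff [X, X, A]) = -1 := by rw [show tightCoeff [X, X, A] = -1 from by decide]; simp [PC]
  have c3 : tightCoeff [A, X, A] = 2 := by decide
  rw [c1, c2, c4, c5, c6, c7, c3]
  match W with
  | [] =>
    simp [lk_nil, emp, lkp_nil]
  | X :: V =>
    rw [lk_X]
    have he : emp (X :: V) = em V := by rw [emp, if_pos ⟨V, rfl⟩]; rfl
    simp [he, lkp_cons, lkp_nil]
    try ring
  | A :: V =>
    rw [lk_A]
    have he : emp (A :: V) = 0 := by
      rw [emp, if_neg]
      rintro ⟨u, hu⟩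
      simp [List.cons_prefix_cons] at hu
    simp [he, lkp_cons, lkp_nil]
    try ring
  | B :: V =>
    rw [lk_B]
    have he : emp (B :: V) = 0 := by
      rw [emp, if_neg]
      rintro ⟨u, hu⟩
      simp [List.cons_prefix_cons] at hu
    simp [he, lkp_cons, lkp_nil]
    try ring

/-- The purely algebraic expansion of `em` along the first word. -/
lemma em_expand (W : PWord) :
    em W = (if W = [] then 1 else 0) + emp W
      + PC (tightCoeff [X, A, A]) * PT * lkp [X, A, A] W
      + PC (tightCoeff [A, X, A]) * PT * lkp [A, X, A] W
      + PC (tightCoeff [A, A, A]) * PT * lkp [A, A, A] W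
      + PC (tightCoeff [A, B, A]) * PT * lkp [A, B, A] W
      + PC (tightCoeff [X, X, A]) * PT * lkp [X, X, A] W := by
  have c2 : PC (tightCoeff [X, A, A]) = 1 := by rw [show tightCoeff [X, A, A] = 1 from by decide]; simp [PC]
  have c4 : PC (tightCoeff [A, A, A]) = -1 := by rw [show tightCoeff [A, A, A] = -1 from by decide]; simp [PC]
  have c6 : PC (tightCoeff [A, B, A]) = -1 := by rw [show tightCoeff [A, B, A] = -1 from by decide]; simp [PC]
  have c7 : PC (tightCoeff [X, X, A]) = -1 := by rw [show tightCoeff [X, X, A] = -1 from by decide]; simp [PC]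
  have c3 : tightCoeff [A, X, A] = 2 := by decide
  rw [c2, c4, c6, c7, c3]
  match W with
  | [] =>
    simp [em_nil, emp, lkp_nil]
  | X :: V =>
    rw [em_X]
    have he : emp (X :: V) = em V := by rw [emp, if_pos ⟨V, rfl⟩]; rfl
    simp [he, lkp_cons, lkp_nil]
    try ring
  | A :: V =>
    rw [em_A]
    have he : emp (A :: V) = 0 := by
      rw [emp, if_neg]
      rintro ⟨u, hu⟩
      simp [List.cons_prefix_cons] at hu
    simp [he, lkp_cons, lkp_nil]
    try ring
  | B :: V =>
    rw [em_B]
    have he : emp (B :: V) = 0 := by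
      rw [emp, if_neg]
      rintro ⟨u, hu⟩
      simp [List.cons_prefix_cons] at hu
    simp [he, lkp_cons, lkp_nil]
    try ring

/-- Main theorem on locked values: the enumerated sums equal the recursions. -/
theorem lock_main : ∀ N : ℕ, ∀ W : PWord, W.length < N →
    S N (lockedF W) = lk W ∧ S N (lockedFM W) = em W := by
  intro N
  induction N with
  | zero => intro W h; omega
  | succ N ih =>
    intro W hW
    have hlen : W.length ≤ N := by omega
    have hIHlk : ∀ V : PWord, V.length < N → S N (lockedF V) = lk V := fun V hV => (ih V hV).1
    have hIHem : ∀ V : PWord, V.length < N → S N (lockedFM V) = em V := fun V hV => (ih V hV).2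
    constructor
    · rw [S_succ, sum_fin9]
      rw [show wordOf 0 = [X] from rfl, show wordOf 1 = [X, A] from rfl,
        show wordOf 2 = [X, A, A] from rfl, show wordOf 3 = [X, B, A] from rfl,
        show wordOf 4 = [A, X, A] from rfl, show wordOf 5 = [A, A, A] from rfl,
        show wordOf 6 = [B, A] from rfl, show wordOf 7 = [A, B, A] from rfl,
        show wordOf 8 = [X, X, A] from rfl]
      rw [step_X N W hIHem hlen, step_XBA,
        step_ne [X, A] (by decide) (by decide) N W hIHlk hlen,
        step_ne [X, A, A] (by decide) (by decide) N W hIHlk hlen,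
        step_ne [A, X, A] (by decide) (by decide) N W hIHlk hlen,
        step_ne [A, A, A] (by decide) (by decide) N W hIHlk hlen,
        step_ne [B, A] (by decide) (by decide) N W hIHlk hlen,
        step_ne [A, B, A] (by decide) (by decide) N W hIHlk hlen,
        step_ne [X, X, A] (by decide) (by decide) N W hIHlk hlen,
        lockedF_nil]
      rw [lk_expand W]
      ring
    · rw [S_succ, sum_fin9]
      rw [show wordOf 0 = [X] from rfl, show wordOf 1 = [X, A] from rfl,
        show wordOf 2 = [X, A, A] from rfl, show wordOf 3 = [X, B, A] from rfl,
        show wordOf 4 = [A, X, A] from rfl, show wordOf 5 = [A, A, A] from rfl,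
        show wordOf 6 = [B, A] from rfl, show wordOf 7 = [A, B, A] from rfl,
        show wordOf 8 = [X, X, A] from rfl]
      rw [step_M_X N W hIHem hlen, step_M_XBA,
        step_M_bad [X, A] (Or.inl rfl) N W,
        step_M_bad [B, A] (Or.inr rfl) N W,
        step_M_ne [X, A, A] (by decide) (by decide) (by decide) (by decide) N W hIHlk hlen,
        step_M_ne [A, X, A] (by decide) (by decide) (by decide) (by decide) N W hIHlk hlen,
        step_M_ne [A, A, A] (by decide) (by decide) (by decide) (by decide) N W hIHlk hlen,
        step_M_ne [A, B, A] (by decide) (by decide) (by decide) (by decide) N W hIHlk hlen,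
        step_M_ne [X, X, A] (by decide) (by decide) (by decide) (by decide) N W hIHlk hlen,
        lockedFM_nil]
      rw [em_expand W]
      ring

theorem lockVal_eq_lk (W : PWord) : lockVal W = lk W := by
  rw [lockVal_eq_S]
  exact (lock_main (W.length + 1) W (by omega)).1

end TightAux
namespace TightAux
open PLetter List

/-! ### Lemmas about `core` and flattenings of tight chains -/

lemma core_eq_rdrop (s : PWord) :
    core s = List.rdropWhile (· == X) (s.dropWhile (· == X)) := rfl

lemma core_nil : core ([] : PWord) = [] := rfl

lemma core_cons_X (s : PWord) : core (X :: s) = core s := by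
  rw [core_eq_rdrop, core_eq_rdrop, List.dropWhile_cons_of_pos (by simp)]

lemma core_eq_self (s : PWord) (h1 : ∀ h : s ≠ [], s.head h ≠ X)
    (h2 : ∀ h : s ≠ [], s.getLast h ≠ X) : core s = s := by
  rcases eq_or_ne s [] with rfl | hs
  · rfl
  rw [core_eq_rdrop]
  have hd : s.dropWhile (· == X) = s := by
    cases s with
    | nil => rfl
    | cons c r =>
      rw [List.dropWhile_cons_of_neg]
      simp only [beq_iff_eq]
      exact h1 (List.cons_ne_nil _ _)
  rw [hd]
  rw [List.rdropWhile_eq_self_iff]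
  intro hl
  simp only [beq_iff_eq]
  exact h2 hl

lemma core_getLast (s : PWord) (h : core s ≠ []) : (core s).getLast h ≠ X := by
  have := List.rdropWhile_last_not (p := (· == X)) (l := s.dropWhile (· == X)) (by rw [← core_eq_rdrop]; exact h)
  simp only [beq_iff_eq] at this
  convert this using 2
  exact core_eq_rdrop s

lemma core_head (s : PWord) (h : core s ≠ []) : (core s).head h ≠ X := by
  have hpre : core s <+: s.dropWhile (· == X) := by
    rw [core_eq_rdrop]; exact List.rdropWhile_prefix _ _
  obtain ⟨u, hu⟩ := hpre
  have hd : s.dropWhile (· == X) ≠ [] := by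
    rw [← hu]; exact fun hc => h (List.append_eq_nil_iff.1 hc).1
  have hhd := List.head_dropWhile_not (· == X) hd
  rw [beq_eq_false_iff_ne] at hhd
  intro hcontr
  apply hhd
  have key : ∀ (m : PWord) (hm : m ≠ []), m = core s ++ u → m.head hm = (core s).head h := by
    intro m hm hmeq
    subst hmeq
    exact List.head_append_left h
  rw [key _ hd hu.symm, hcontr]

lemma core_core (s : PWord) : core (core s) = core s :=
  core_eq_self _ (core_head s) (core_getLast s)

lemma core_length_le (s : PWord) : (core s).length ≤ s.length := by
  have h1 : core s <+: s.dropWhile (· == X) := by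
    rw [core_eq_rdrop]; exact List.rdropWhile_prefix _ _
  have h2 : s.dropWhile (· == X) <:+ s := List.dropWhile_suffix _
  exact le_trans h1.length_le h2.length_le

lemma core_word (c : PLetter) (hc : c ≠ X) (r : PWord)
    (hr : r = [] ∨ ∃ u, r = u ++ [A]) : core (c :: r) = c :: r := by
  apply core_eq_self
  · intro h; simpa using hc
  · intro h
    rcases hr with rfl | ⟨u, rfl⟩
    · simpa using hc
    · have key : ∀ (m : PWord) (hm : m ≠ []), m = (c :: u) ++ [A] → m.getLast hm = A := by
        intro m hm hmeq
        subst hmeq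
        exact List.getLast_concat
      rw [key _ h rfl]
      decide

lemma flatten_concat (L : List PWord) (h : L ≠ []) :
    L.flatten = L.dropLast.flatten ++ L.getLast h := by
  conv_lhs => rw [← List.dropLast_append_getLast h]
  rw [List.flatten_append]
  simp

lemma word_ends_A (w : PWord) (hw : w ∈ tightWords) (hne : w ≠ [X]) : ∃ u, w = u ++ [A] := by
  simp only [tightWords, List.mem_cons, List.not_mem_nil, or_false] at hw
  rcases hw with rfl | rfl | rfl | rfl | rfl | rfl | rfl | rfl
  · exact absurd rfl hne
  · exact ⟨[X], rfl⟩
  · exact ⟨[X, A], rfl⟩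
  · exact ⟨[A, X], rfl⟩
  · exact ⟨[A, A], rfl⟩
  · exact ⟨[B], rfl⟩
  · exact ⟨[A, B], rfl⟩
  · exact ⟨[X, X], rfl⟩

lemma ends_A (L : List PWord) (hmem : ∀ u ∈ L, u ∈ tightWords) (h : L ≠ [])
    (hlast : L.getLast h ≠ [X]) : ∃ u, L.flatten = u ++ [A] := by
  obtain ⟨u', hu'⟩ := word_ends_A _ (hmem _ (List.getLast_mem h)) hlast
  exact ⟨L.dropLast.flatten ++ u', by rw [flatten_concat L h, hu', List.append_assoc]⟩

lemma ends_X (L : List PWord) (h : L ≠ []) (hlast : L.getLast h = [X]) :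
    ∃ u, L.flatten = u ++ [X] := ⟨L.dropLast.flatten, by rw [flatten_concat L h, hlast]⟩

end TightAux
namespace TightAux
open PLetter List

/-! ### Analysis of open parsings -/

/-- The summand of `openVal`. -/
noncomputable def openF (W : PWord) (L : List PWord) : Polynomial ℤ :=
  if IsOpenParsing W L then parseVal tightCoeff L else 0

lemma openVal_eq_S' (W : PWord) : openVal W = S (W.length + 3) (openF W) := rfl

lemma openF_nil (W : PWord) : openF W [] = if core W = [] then 1 else 0 := by
  have hiff : IsOpenParsing W [] ↔ core W = [] := by
    constructor
    · rintro ⟨-, h, -⟩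
      exact h.symm
    · intro h
      exact ⟨⟨by simp, List.isChain_nil⟩, by rw [h]; rfl, fun hc => absurd rfl hc⟩
  rw [openF]
  split_ifs with h1 h2 h2
  · exact parseVal_nil
  · exact absurd (hiff.1 h1) h2
  · exact absurd (hiff.2 h2) h1
  · rfl

lemma openF_cons_badhead (w : PWord) (h : w = [X] ∨ w = [X, A] ∨ w = [B, A]) (W : PWord)
    (L : List PWord) : openF W (w :: L) = 0 := by
  rw [openF, if_neg]
  rintro ⟨-, -, hconds⟩
  obtain ⟨h1, h2, h3, -⟩ := hconds (List.cons_ne_nil _ _)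
  rw [List.head_cons] at h1 h2 h3
  rcases h with rfl | rfl | rfl
  · exact h1 rfl
  · exact h2 rfl
  · exact h3 rfl

lemma openF_cons_XBA (W : PWord) (L : List PWord) : openF W ([X, B, A] :: L) = 0 := by
  rw [openF, if_neg]
  rintro ⟨⟨hmem, -⟩, -⟩
  exact (by decide : [X, B, A] ∉ tightWords) (hmem _ (List.mem_cons_self))

/-- The key pointwise analysis: an open parsing beginning with the word `w` is a
locked parsing of the remainder of `core W` after the reduced prefix `pref`. -/
lemma openF_cons (w pref : PWord) (hw : w ∈ tightWords) (hX : w ≠ [X]) (hXA : w ≠ [X, A])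
    (hBA : w ≠ [B, A]) (hpref : pref ≠ [])
    (hcore : ∀ r : PWord, (r = [] ∨ ∃ u, r = u ++ [A]) → core (w ++ r) = pref ++ r)
    (W : PWord) (L : List PWord) :
    openF W (w :: L) =
      if pref <+: core W then
        PC (tightCoeff w) * PT * lockedF ((core W).drop pref.length) L
      else 0 := by
  by_cases hO : IsOpenParsing W (w :: L)
  · obtain ⟨⟨hmem, hch⟩, hcoreEq, hconds⟩ := hO
    have hLend : L.flatten = [] ∨ ∃ u, L.flatten = u ++ [A] := by
      rcases eq_or_ne L [] with rfl | hL
      · exact Or.inl rfl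
      · refine Or.inr (ends_A L (fun u hu => hmem u (List.mem_cons_of_mem _ hu)) hL ?_)
        have h4 := (hconds (List.cons_ne_nil _ _)).2.2.2
        rwa [List.getLast_cons hL] at h4
    have hc2 : core W = pref ++ L.flatten := by
      rw [← hcoreEq, List.flatten_cons]
      exact hcore _ hLend
    have hp : pref <+: core W := ⟨_, hc2.symm⟩
    rw [if_pos hp, openF, if_pos ⟨⟨hmem, hch⟩, hcoreEq, hconds⟩]
    have hV : (core W).drop pref.length = L.flatten := by rw [hc2, List.drop_left]
    have hLk : IsLockedParsing ((core W).drop pref.length) L :=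
      ⟨⟨fun u hu => hmem u (List.mem_cons_of_mem _ hu), (List.isChain_cons.1 hch).2⟩, hV.symm⟩
    rw [lockedF, if_pos hLk, parseVal_cons w hX]
  · rw [openF, if_neg hO]
    by_cases hp : pref <+: core W
    · rw [if_pos hp, lockedF]
      split_ifs with hLk
      · exfalso
        apply hO
        obtain ⟨V', hV'⟩ := hp
        have hdrop : (core W).drop pref.length = V' := by rw [← hV', List.drop_left]
        rw [hdrop] at hLk
        obtain ⟨⟨hmem, hch⟩, hfl⟩ := hLk
        have hcw_ne : core W ≠ [] := by
          rw [← hV']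
          intro hc
          exact hpref (List.append_eq_nil_iff.1 hc).1
        have hlastW := core_getLast W hcw_ne
        have hLlast : ∀ hL : L ≠ [], L.getLast hL ≠ [X] := by
          intro hL hbad
          obtain ⟨u, hu⟩ := ends_X L hL hbad
          apply hlastW
          have key : ∀ (m : PWord) (hm : m ≠ []), m = (pref ++ u) ++ [X] → m.getLast hm = X := by
            intro m hm hmeq
            subst hmeq
            exact List.getLast_concat
          exact key _ hcw_ne (by rw [← hV', ← hfl, hu, List.append_assoc])
        have hVend : V' = [] ∨ ∃ u, V' = u ++ [A] := by
          rcases eq_or_ne L [] with rfl | hL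
          · exact Or.inl hfl.symm
          · obtain ⟨u, hu⟩ := ends_A L hmem hL (hLlast hL)
            exact Or.inr ⟨u, by rw [← hfl, hu]⟩
        refine ⟨⟨?_, ?_⟩, ?_, ?_⟩
        · intro u hu
          rcases List.mem_cons.1 hu with rfl | hu
          · exact hw
          · exact hmem u hu
        · exact List.isChain_cons.2 ⟨fun y _ => not_bad_of_ne hX, hch⟩
        · rw [List.flatten_cons, hfl, hcore V' hVend, hV']
        · intro h
          simp only [List.head_cons]
          refine ⟨hX, hXA, hBA, ?_⟩
          rcases eq_or_ne L [] with rfl | hL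
          · simpa using hX
          · rw [List.getLast_cons hL]
            exact hLlast hL
      · rw [mul_zero]
    · rw [if_neg hp]

end TightAux
namespace TightAux
open PLetter List

/-- The open value, expressed through the core. -/
noncomputable def ovalE (s : PWord) : Polynomial ℤ :=
  (if s = [] then 1 else 0)
    + PC (tightCoeff [X, A, A]) * PT * lkp [A, A] s
    + PC (tightCoeff [A, X, A]) * PT * lkp [A, X, A] s
    + PC (tightCoeff [A, A, A]) * PT * lkp [A, A, A] s
    + PC (tightCoeff [A, B, A]) * PT * lkp [A, B, A] s
    + PC (tightCoeff [X, X, A]) * PT * lkp [A] s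

lemma step_open (w pref : PWord) (hw : w ∈ tightWords) (hX : w ≠ [X]) (hXA : w ≠ [X, A])
    (hBA : w ≠ [B, A]) (hpref : pref ≠ [])
    (hcore : ∀ r : PWord, (r = [] ∨ ∃ u, r = u ++ [A]) → core (w ++ r) = pref ++ r)
    (N : ℕ) (W : PWord) (hN : (core W).length < N) :
    S N (fun L => openF W (w :: L)) = PC (tightCoeff w) * PT * lkp pref (core W) := by
  rw [S_congr (openF_cons w pref hw hX hXA hBA hpref hcore W)]
  by_cases hp : pref <+: core W
  · simp only [if_pos hp]
    rw [S_mul, lkp, if_pos hp]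
    congr 1
    refine (lock_main N _ ?_).1
    calc ((core W).drop pref.length).length ≤ (core W).length := by
          rw [List.length_drop]; omega
      _ < N := hN
  · simp only [if_neg hp]
    rw [S_zero, lkp, if_neg hp, mul_zero]

lemma step_open_bad (w : PWord) (h : w = [X] ∨ w = [X, A] ∨ w = [B, A]) (N : ℕ) (W : PWord) :
    S N (fun L => openF W (w :: L)) = 0 := by
  rw [S_congr (openF_cons_badhead w h W), S_zero]

lemma step_open_XBA (N : ℕ) (W : PWord) :
    S N (fun L => openF W ([X, B, A] :: L)) = 0 := by
  rw [S_congr (openF_cons_XBA W), S_zero]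

theorem openVal_eq_ovalE (W : PWord) : openVal W = ovalE (core W) := by
  have hN : (core W).length < W.length + 2 := by
    have := core_length_le W
    omega
  rw [openVal_eq_S', S_succ, sum_fin9]
  rw [show wordOf 0 = [X] from rfl, show wordOf 1 = [X, A] from rfl,
    show wordOf 2 = [X, A, A] from rfl, show wordOf 3 = [X, B, A] from rfl,
    show wordOf 4 = [A, X, A] from rfl, show wordOf 5 = [A, A, A] from rfl,
    show wordOf 6 = [B, A] from rfl, show wordOf 7 = [A, B, A] from rfl,
    show wordOf 8 = [X, X, A] from rfl]
  rw [openF_nil, step_open_bad [X] (Or.inl rfl), step_open_bad [X, A] (Or.inr (Or.inl rfl)),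
    step_open_bad [B, A] (Or.inr (Or.inr rfl)), step_open_XBA]
  rw [step_open [X, A, A] [A, A] (by decide) (by decide) (by decide) (by decide) (by decide)
      ?hc1 _ W hN,
    step_open [A, X, A] [A, X, A] (by decide) (by decide) (by decide) (by decide) (by decide)
      ?hc2 _ W hN,
    step_open [A, A, A] [A, A, A] (by decide) (by decide) (by decide) (by decide) (by decide)
      ?hc3 _ W hN,
    step_open [A, B, A] [A, B, A] (by decide) (by decide) (by decide) (by decide) (by decide)
      ?hc4 _ W hN,
    step_open [X, X, A] [A] (by decide) (by decide) (by decide) (by decide) (by decide)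
      ?hc5 _ W hN]
  case hc1 =>
    intro r hr
    show core (X :: A :: A :: r) = [A, A] ++ r
    rw [core_cons_X]
    refine core_word A (by decide) (A :: r) ?_
    rcases hr with rfl | ⟨u, rfl⟩
    · exact Or.inr ⟨[], rfl⟩
    · exact Or.inr ⟨A :: u, rfl⟩
  case hc2 =>
    intro r hr
    show core (A :: X :: A :: r) = [A, X, A] ++ r
    refine core_word A (by decide) (X :: A :: r) ?_
    rcases hr with rfl | ⟨u, rfl⟩
    · exact Or.inr ⟨[X], rfl⟩
    · exact Or.inr ⟨X :: A :: u, rfl⟩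
  case hc3 =>
    intro r hr
    show core (A :: A :: A :: r) = [A, A, A] ++ r
    refine core_word A (by decide) (A :: A :: r) ?_
    rcases hr with rfl | ⟨u, rfl⟩
    · exact Or.inr ⟨[A], rfl⟩
    · exact Or.inr ⟨A :: A :: u, rfl⟩
  case hc4 =>
    intro r hr
    show core (A :: B :: A :: r) = [A, B, A] ++ r
    refine core_word A (by decide) (B :: A :: r) ?_
    rcases hr with rfl | ⟨u, rfl⟩
    · exact Or.inr ⟨[B], rfl⟩
    · exact Or.inr ⟨B :: A :: u, rfl⟩
  case hc5 =>
    intro r hr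
    show core (X :: X :: A :: r) = [A] ++ r
    rw [core_cons_X, core_cons_X]
    exact core_word A (by decide) r hr
  rw [ovalE]
  ring

end TightAux
namespace TightAux
open PLetter List

/-! ### Trailing `X`s do not change locked values -/

/-- Trim trailing `X`s. -/
def trimR (s : PWord) : PWord := List.rdropWhile (· == X) s

lemma core_cons_ne (c : PLetter) (hc : c ≠ X) (s : PWord) :
    core (c :: s) = trimR (c :: s) := by
  rw [core_eq_rdrop, List.dropWhile_cons_of_neg (by simpa using hc)]
  rfl

lemma trimR_cons (c : PLetter) (hc : c ≠ X) (s : PWord) :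
    trimR (c :: s) = c :: trimR s := by
  have hrev : (c :: s).reverse = s.reverse ++ [c] := by simp
  rw [trimR, List.rdropWhile, hrev, List.dropWhile_append]
  split_ifs with h
  · rw [List.dropWhile_cons_of_neg (by simpa using hc)]
    rw [List.isEmpty_iff] at h
    have : trimR s = [] := by rw [trimR, List.rdropWhile, h]; rfl
    rw [this]
    rfl
  · rw [List.reverse_append]
    rfl

lemma exists_trim (s : PWord) : ∃ b, s = trimR s ++ List.replicate b X := by
  refine ⟨(List.rtakeWhile (· == X) s).length, ?_⟩
  have h1 : List.rdropWhile (· == X) s ++ List.rtakeWhile (· == X) s = s := by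
    rw [List.rdropWhile, List.rtakeWhile, ← List.reverse_append,
      List.takeWhile_append_dropWhile, List.reverse_reverse]
  have h2 : List.rtakeWhile (· == X) s
      = List.replicate (List.rtakeWhile (· == X) s).length X := by
    apply List.eq_replicate_of_mem
    intro b hb
    have := List.mem_rtakeWhile_imp hb
    simpa using this
  rw [trimR]
  nth_rewrite 1 [← h1]
  rw [← h2]

theorem lkem_snocX : ∀ N : ℕ, ∀ u : PWord, u.length ≤ N →
    lk (u ++ [X]) = lk u ∧ em (u ++ [X]) = em u := by
  have hnil : lk ([X] : PWord) = lk [] ∧ em ([X] : PWord) = em [] := by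
    constructor
    · show lk (X :: []) = _
      rw [lk_X, lk_nil, em_nil]
      simp [lkp_nil]
    · show em (X :: []) = _
      rw [em_X, em_nil]
      simp [lkp_nil]
  have lkp1 : ∀ (a : PLetter), a ≠ X → ∀ V : PWord,
      lk (V.drop 1 ++ [X]) = lk (V.drop 1) → lkp [a] (V ++ [X]) = lkp [a] V := by
    intro a ha V h
    cases V with
    | nil => simp [lkp_cons, lkp_nil, ha]
    | cons c V' =>
      have : (c :: V') ++ [X] = c :: (V' ++ [X]) := rfl
      rw [this, lkp_cons, lkp_cons]
      have hlkp : ∀ s : PWord, lkp [] s = lk s := by intro s; simp [lkp]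
      rw [hlkp, hlkp]
      simp only [List.drop_one, List.tail_cons] at h
      rw [h]
  have lkp2 : ∀ (a b : PLetter), b ≠ X → ∀ V : PWord,
      lk (V.drop 2 ++ [X]) = lk (V.drop 2) → lkp [a, b] (V ++ [X]) = lkp [a, b] V := by
    intro a b hb V h
    cases V with
    | nil => simp [lkp_cons, lkp_nil, hb]
    | cons c V' =>
      cases V' with
      | nil =>
        have : ([c] : PWord) ++ [X] = [c, X] := rfl
        rw [this, lkp_cons, lkp_cons, lkp_cons, lkp_nil]
        simp [lkp_cons, lkp_nil, hb]
      | cons d V'' =>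
        have : (c :: d :: V'') ++ [X] = c :: d :: (V'' ++ [X]) := rfl
        rw [this, lkp_cons, lkp_cons, lkp_cons, lkp_cons]
        have hlkp : ∀ s : PWord, lkp [] s = lk s := by intro s; simp [lkp]
        rw [hlkp, hlkp]
        have h2 : lk (V'' ++ [X]) = lk V'' := by simpa using h
        rw [h2]
  intro N
  induction N with
  | zero =>
    intro u hu
    have : u = [] := by
      cases u
      · rfl
      · simp at hu
    subst this
    simpa using hnil
  | succ N ih =>
    intro u hu
    cases u with
    | nil => simpa using hnil
    | cons c V =>
      have hV : V.length ≤ N := by simp at hu; omega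
      have hd1 : lk (V.drop 1 ++ [X]) = lk (V.drop 1) :=
        (ih (V.drop 1) (by rw [List.length_drop]; omega)).1
      have hd2 : lk (V.drop 2 ++ [X]) = lk (V.drop 2) :=
        (ih (V.drop 2) (by rw [List.length_drop]; omega)).1
      have hEm : em (V ++ [X]) = em V := (ih V hV).2
      have hcons : (c :: V) ++ [X] = c :: (V ++ [X]) := rfl
      cases c with
      | X =>
        constructor
        · rw [hcons, lk_X, lk_X, hEm, lkp1 A (by decide) V hd1,
            lkp2 A A (by decide) V hd2, lkp2 X A (by decide) V hd2]
        · rw [hcons, em_X, em_X, hEm, lkp2 A A (by decide) V hd2,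
            lkp2 X A (by decide) V hd2]
      | A =>
        constructor
        · rw [hcons, lk_A, lk_A, lkp2 X A (by decide) V hd2,
            lkp2 A A (by decide) V hd2, lkp2 B A (by decide) V hd2]
        · rw [hcons, em_A, em_A, lkp2 X A (by decide) V hd2,
            lkp2 A A (by decide) V hd2, lkp2 B A (by decide) V hd2]
      | B =>
        constructor
        · rw [hcons, lk_B, lk_B, lkp1 A (by decide) V hd1]
        · rw [hcons, em_B, em_B]

lemma lk_snocX (u : PWord) : lk (u ++ [X]) = lk u := (lkem_snocX u.length u le_rfl).1

lemma lkp1_snocX (a : PLetter) (ha : a ≠ X) (V : PWord) :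
    lkp [a] (V ++ [X]) = lkp [a] V := by
  cases V with
  | nil => simp [lkp_cons, lkp_nil, ha]
  | cons c V' =>
    have : (c :: V') ++ [X] = c :: (V' ++ [X]) := rfl
    rw [this, lkp_cons, lkp_cons]
    have hlkp : ∀ s : PWord, lkp [] s = lk s := by intro s; simp [lkp]
    rw [hlkp, hlkp, lk_snocX]

lemma lkp2_snocX (a b : PLetter) (hb : b ≠ X) (V : PWord) :
    lkp [a, b] (V ++ [X]) = lkp [a, b] V := by
  cases V with
  | nil => simp [lkp_cons, lkp_nil, hb]
  | cons c V' =>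
    cases V' with
    | nil =>
      have : ([c] : PWord) ++ [X] = [c, X] := rfl
      rw [this, lkp_cons, lkp_cons, lkp_cons, lkp_nil]
      simp [lkp_cons, lkp_nil, hb]
    | cons d V'' =>
      have : (c :: d :: V'') ++ [X] = c :: d :: (V'' ++ [X]) := rfl
      rw [this, lkp_cons, lkp_cons, lkp_cons, lkp_cons]
      have hlkp : ∀ s : PWord, lkp [] s = lk s := by intro s; simp [lkp]
      rw [hlkp, hlkp, lk_snocX]

lemma snoc_rep (u : PWord) (b : ℕ) : u ++ List.replicate b X = (u ++ [X]) ++ List.replicate (b-1) X ∨ b = 0 := by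
  cases b with
  | zero => exact Or.inr rfl
  | succ b => exact Or.inl (by rw [List.replicate_succ, List.append_assoc]; rfl)

lemma lk_rep (b : ℕ) : ∀ u : PWord, lk (u ++ List.replicate b X) = lk u := by
  induction b with
  | zero => intro u; simp
  | succ b ih =>
    intro u
    rw [List.replicate_succ, show u ++ (X :: List.replicate b X) = (u ++ [X]) ++ List.replicate b X from by simp, ih, lk_snocX]

lemma lkp1_rep (a : PLetter) (ha : a ≠ X) (b : ℕ) : ∀ u : PWord,
    lkp [a] (u ++ List.replicate b X) = lkp [a] u := by
  induction b with
  | zero => intro u; simp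
  | succ b ih =>
    intro u
    rw [List.replicate_succ, show u ++ (X :: List.replicate b X) = (u ++ [X]) ++ List.replicate b X from by simp, ih, lkp1_snocX a ha]

lemma lkp2_rep (a c : PLetter) (hc : c ≠ X) (b : ℕ) : ∀ u : PWord,
    lkp [a, c] (u ++ List.replicate b X) = lkp [a, c] u := by
  induction b with
  | zero => intro u; simp
  | succ b ih =>
    intro u
    rw [List.replicate_succ, show u ++ (X :: List.replicate b X) = (u ++ [X]) ++ List.replicate b X from by simp, ih, lkp2_snocX a c hc]

lemma lk_trim (s : PWord) : lk (trimR s) = lk s := by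
  obtain ⟨b, hb⟩ := exists_trim s
  conv_rhs => rw [hb]
  rw [lk_rep]

lemma lkp1_trim (a : PLetter) (ha : a ≠ X) (s : PWord) : lkp [a] (trimR s) = lkp [a] s := by
  obtain ⟨b, hb⟩ := exists_trim s
  conv_rhs => rw [hb]
  rw [lkp1_rep a ha]

lemma lkp2_trim (a c : PLetter) (hc : c ≠ X) (s : PWord) :
    lkp [a, c] (trimR s) = lkp [a, c] s := by
  obtain ⟨b, hb⟩ := exists_trim s
  conv_rhs => rw [hb]
  rw [lkp2_rep a c hc]

/-! ### The main algebraic identity -/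

theorem ovalE_core (W : PWord) :
    ovalE (core W) = em W - PT * lkp [A] W + PT * lkp [A, A] W - PT * lkp [X, A] W := by
  have c2 : PC (tightCoeff [X, A, A]) = 1 := by
    rw [show tightCoeff [X, A, A] = 1 from by decide]; simp [PC]
  have c4 : PC (tightCoeff [A, A, A]) = -1 := by
    rw [show tightCoeff [A, A, A] = -1 from by decide]; simp [PC]
  have c6 : PC (tightCoeff [A, B, A]) = -1 := by
    rw [show tightCoeff [A, B, A] = -1 from by decide]; simp [PC]
  have c7 : PC (tightCoeff [X, X, A]) = -1 := by
    rw [show tightCoeff [X, X, A] = -1 from by decide]; simp [PC]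
  have c3 : tightCoeff [A, X, A] = 2 := by decide
  induction W with
  | nil =>
    rw [core_nil, ovalE]
    simp [lkp_nil, em_nil]
  | cons c V ih =>
    cases c with
    | X =>
      rw [core_cons_X, ih, em_X]
      rw [lkp_cons, lkp_cons, lkp_cons]
      simp only [if_neg (by decide : ¬ (PLetter.A = X)), if_pos rfl, if_true]
      ring
    | A =>
      rw [core_cons_ne A (by decide), trimR_cons A (by decide), ovalE, c2, c3, c4, c6, c7]
      rw [if_neg (List.cons_ne_nil _ _)]
      rw [lkp_cons, lkp_cons, lkp_cons, lkp_cons, lkp_cons]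
      simp only [if_pos rfl, if_true]
      have hlkp : ∀ s : PWord, lkp [] s = lk s := by intro s; simp [lkp]
      rw [hlkp]
      rw [lkp1_trim A (by decide), lkp2_trim X A (by decide), lkp2_trim A A (by decide),
        lkp2_trim B A (by decide), lk_trim]
      rw [em_A, lkp_cons, lkp_cons, lkp_cons]
      simp only [if_pos rfl, if_true, if_neg (by decide : ¬ (PLetter.X = A)),
        if_neg (by decide : ¬ (PLetter.B = A))]
      rw [hlkp]
      ring
    | B =>
      rw [core_cons_ne B (by decide), trimR_cons B (by decide), ovalE, c2, c3, c4, c6, c7]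
      rw [if_neg (List.cons_ne_nil _ _)]
      rw [lkp_cons, lkp_cons, lkp_cons, lkp_cons, lkp_cons]
      simp only [if_neg (by decide : ¬ (PLetter.A = B))]
      rw [em_B, lkp_cons, lkp_cons, lkp_cons]
      simp only [if_neg (by decide : ¬ (PLetter.A = B)),
        if_neg (by decide : ¬ (PLetter.X = B)), if_pos rfl, if_true]
      ring

end TightAux
open TightAux in
open PLetter in
/-- For every finite string `W`, `|W| = |[XW]| - |[AXW]|` (open vs. locked values in
the tight puzzle). -/
theorem open_eq_locked_diff (W : PWord) :
    openVal W = lockVal ([X] ++ W) - lockVal ([A, X] ++ W) := by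
  rw [lockVal_eq_lk, lockVal_eq_lk, openVal_eq_ovalE, ovalE_core]
  rw [show ([X] ++ W : PWord) = X :: W from rfl,
    show ([A, X] ++ W : PWord) = A :: (X :: W) from rfl]
  rw [lk_X, lk_A, lkp_cons, lkp_cons, lkp_cons]
  simp only [if_pos rfl, if_true, if_neg (by decide : ¬ (PLetter.A = X)),
    if_neg (by decide : ¬ (PLetter.B = X))]
  have hC : PC 2 = 2 := by simp [PC]
  rw [hC]
  ring
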